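/- arXiv:2012.05966 — 2 statements merged into one kernel-verified Lean document; each statement's English description precedes it below -/
import Mathlib

section
/- Let (A,B) be controllable with A ∈ ℝ^{4×4}, B ∈ ℝ^{4×1}, let λ₁,λ₂,λ₃,λ₄ be desired eigenvalues, P(λ)=∏_{i=1}^4(λ−λ_i), P₁(λ)=∏_{i=1}^3(λ−λ_i), k^T = e^T P(A) the Ackermann gain, and η^T = e^T P₁(A). Then η^T (A − B k^T) = λ₄ η^T, i.e., η^T is a left eigenvector of the closed-loop matrix A* = A − B k^T with eigenvalue λ₄. -/
open Matrix Polynomial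

/-- With the Ackermann gain `k` placing eigenvalues `λ₁,…,λ₄` and
`η = e ᵥ* P₁(A)` (where `P₁` has roots `λ₁,λ₂,λ₃`), the row vector `η` is a left
eigenvector of the closed-loop matrix `A - B kᵀ` with eigenvalue `λ₄`. -/
theorem stmt1
    (A : Matrix (Fin 4) (Fin 4) ℝ) (B : Fin 4 → ℝ)
    (Ctrb : Matrix (Fin 4) (Fin 4) ℝ)
    (hCtrb : ∀ i j : Fin 4, Ctrb i j = ((A ^ (j : ℕ)) *ᵥ B) i)
    (hinv : IsUnit Ctrb.det)
    (e : Fin 4 → ℝ) (he : ∀ j, e j = Ctrb⁻¹ 3 j)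
    (lam₁ lam₂ lam₃ lam₄ : ℝ)
    (P P₁ : Polynomial ℝ)
    (hP : P = (X - C lam₁) * (X - C lam₂) * (X - C lam₃) * (X - C lam₄))
    (hP₁ : P₁ = (X - C lam₁) * (X - C lam₂) * (X - C lam₃))
    (k η : Fin 4 → ℝ)
    (hk : k = Matrix.vecMul e (Polynomial.aeval A P))
    (hη : η = Matrix.vecMul e (Polynomial.aeval A P₁)) :
    Matrix.vecMul η (A - Matrix.vecMulVec B k) = lam₄ • η := by
  -- key orthogonality relations
  have key : ∀ j : Fin 4, e ⬝ᵥ ((A ^ (j : ℕ)) *ᵥ B) = (1 : Matrix (Fin 4) (Fin 4) ℝ) 3 j := by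
    intro j
    have h : e ⬝ᵥ ((A ^ (j : ℕ)) *ᵥ B) = (Ctrb⁻¹ * Ctrb) 3 j := by
      simp only [Matrix.mul_apply, dotProduct]
      refine Finset.sum_congr rfl fun i _ => ?_
      rw [he, hCtrb]
    rw [h, Matrix.nonsing_inv_mul _ hinv]
  have h0 : e ⬝ᵥ ((A ^ (0:ℕ)) *ᵥ B) = 0 := by
    have := key 0; simpa [Matrix.one_apply] using this
  have h1 : e ⬝ᵥ ((A ^ (1:ℕ)) *ᵥ B) = 0 := by
    have := key 1; simpa [Matrix.one_apply] using this
  have h2 : e ⬝ᵥ ((A ^ (2:ℕ)) *ᵥ B) = 0 := by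
    have := key 2; simpa [Matrix.one_apply] using this
  have h3 : e ⬝ᵥ ((A ^ (3:ℕ)) *ᵥ B) = 1 := by
    have := key 3; simpa [Matrix.one_apply] using this
  -- expand P₁(A)
  have hP₁A : (aeval A P₁ : Matrix (Fin 4) (Fin 4) ℝ)
      = A ^ 3 - (lam₁ + lam₂ + lam₃) • A ^ 2
        + (lam₁ * lam₂ + lam₁ * lam₃ + lam₂ * lam₃) • A
        - (lam₁ * lam₂ * lam₃) • (1 : Matrix (Fin 4) (Fin 4) ℝ) := by
    rw [hP₁]
    simp only [_root_.map_mul, map_sub, aeval_X, aeval_C, Algebra.algebraMap_eq_smul_one]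
    noncomm_ring
    module
  -- η ⬝ᵥ B = 1
  have hηB : η ⬝ᵥ B = 1 := by
    rw [hη, ← Matrix.dotProduct_mulVec, hP₁A]
    simp only [Matrix.sub_mulVec, Matrix.add_mulVec, Matrix.smul_mulVec,
      Matrix.one_mulVec, dotProduct_sub, dotProduct_add, dotProduct_smul]
    have h1' : e ⬝ᵥ A *ᵥ B = 0 := by simpa using h1
    have h0' : e ⬝ᵥ B = 0 := by simpa using h0
    rw [h3, h2, h1', h0']
    simp
  -- P(A) = P₁(A) * (A - lam₄ • 1)
  have hPA : (aeval A P : Matrix (Fin 4) (Fin 4) ℝ)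
      = aeval A P₁ * (A - lam₄ • 1) := by
    rw [hP, hP₁, _root_.map_mul]
    congr 1
    simp [Algebra.algebraMap_eq_smul_one]
  -- k = η A - lam₄ • η
  have hk' : k = Matrix.vecMul η A - lam₄ • η := by
    rw [hk, hPA, ← Matrix.vecMul_vecMul, ← hη]
    rw [Matrix.vecMul_sub]
    congr 1
    ext j
    simp [Matrix.vecMul, dotProduct, Matrix.one_apply, Finset.mul_sum, mul_comm]
  -- finish
  have hrank1 : Matrix.vecMul η (Matrix.vecMulVec B k) = (η ⬝ᵥ B) • k := by
    ext j
    simp [Matrix.vecMul, Matrix.vecMulVec, dotProduct, Finset.sum_mul, mul_assoc]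
  rw [Matrix.vecMul_sub, hrank1, hηB, one_smul, hk']
  abel
end

section
/- With the Ackermann gain k^T = e^T P(A) for a controllable pair (A,B) in ℝ^4, the characteristic polynomial of the closed-loop matrix A − B k^T equals P(λ) = (λ−λ₁)(λ−λ₂)(λ−λ₃)(λ−λ₄). -/
open Matrix Polynomial

theorem ack_det_fin_four {R : Type*} [CommRing R] (A : Matrix (Fin 4) (Fin 4) R) :
    A.det =
      A 0 0 * (A 1 1 * A 2 2 * A 3 3 - A 1 1 * A 2 3 * A 3 2 - A 1 2 * A 2 1 * A 3 3
        + A 1 2 * A 2 3 * A 3 1 + A 1 3 * A 2 1 * A 3 2 - A 1 3 * A 2 2 * A 3 1)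
      - A 0 1 * (A 1 0 * A 2 2 * A 3 3 - A 1 0 * A 2 3 * A 3 2 - A 1 2 * A 2 0 * A 3 3
        + A 1 2 * A 2 3 * A 3 0 + A 1 3 * A 2 0 * A 3 2 - A 1 3 * A 2 2 * A 3 0)
      + A 0 2 * (A 1 0 * A 2 1 * A 3 3 - A 1 0 * A 2 3 * A 3 1 - A 1 1 * A 2 0 * A 3 3
        + A 1 1 * A 2 3 * A 3 0 + A 1 3 * A 2 0 * A 3 1 - A 1 3 * A 2 1 * A 3 0)
      - A 0 3 * (A 1 0 * A 2 1 * A 3 2 - A 1 0 * A 2 2 * A 3 1 - A 1 1 * A 2 0 * A 3 2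
        + A 1 1 * A 2 2 * A 3 0 + A 1 2 * A 2 0 * A 3 1 - A 1 2 * A 2 1 * A 3 0) := by
  rw [Matrix.det_succ_row_zero, Fin.sum_univ_four]
  simp (config := { decide := true }) [Matrix.det_fin_three, Matrix.submatrix_apply,
    Fin.succAbove, Fin.lt_def, show (Fin.succ 2 : Fin 4) = 3 from rfl,
    show (Fin.castSucc 2 : Fin 4) = 2 from rfl, show (Fin.succ 0 : Fin 4) = 1 from rfl,
    show (Fin.succ 1 : Fin 4) = 2 from rfl]
  ring

theorem ack_charpoly_conj4 (T M : Matrix (Fin 4) (Fin 4) ℝ) (h : IsUnit T.det) :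
    (T⁻¹ * M * T).charpoly = M.charpoly := by
  have h1 : T * (T⁻¹ * M * T) = M * T := by
    rw [← Matrix.mul_assoc, Matrix.mul_nonsing_inv_cancel_left _ _ h]
  have hTc : T.map C * charmatrix (T⁻¹ * M * T) = charmatrix M * T.map C := by
    simp only [charmatrix, RingHom.mapMatrix_apply, Matrix.mul_sub, Matrix.sub_mul]
    rw [← Matrix.map_mul, h1, Matrix.map_mul,
      (Matrix.scalar_commute (X : ℝ[X]) (fun r' => Commute.all _ _) (T.map C)).eq]
  have hdet := congrArg Matrix.det hTc
  have hmap : (T.map (C : ℝ →+* ℝ[X])).det = C T.det := by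
    rw [RingHom.map_det]; rfl
  rw [Matrix.det_mul, Matrix.det_mul, hmap] at hdet
  have hne : (C T.det : ℝ[X]) ≠ 0 := by simpa using h.ne_zero
  unfold Matrix.charpoly
  exact mul_left_cancel₀ hne (by rw [hdet, mul_comm])

theorem ack_vecMul_vecMulVec (v B k : Fin 4 → ℝ) :
    Matrix.vecMul v (Matrix.vecMulVec B k) = (v ⬝ᵥ B) • k := by
  funext j
  simp [Matrix.vecMul, Matrix.vecMulVec, dotProduct, Finset.sum_mul, mul_assoc]


/-- With the Ackermann gain `k = e ᵥ* P(A)` for a controllable pair `(A,B)` in `ℝ⁴`,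
the characteristic polynomial of the closed-loop matrix `A - B kᵀ` equals
`P(λ) = (λ-λ₁)(λ-λ₂)(λ-λ₃)(λ-λ₄)`. -/
theorem stmt2
    (A : Matrix (Fin 4) (Fin 4) ℝ) (B : Fin 4 → ℝ)
    (Ctrb : Matrix (Fin 4) (Fin 4) ℝ)
    (hCtrb : ∀ i j : Fin 4, Ctrb i j = ((A ^ (j : ℕ)) *ᵥ B) i)
    (hinv : IsUnit Ctrb.det)
    (e : Fin 4 → ℝ) (he : ∀ j, e j = Ctrb⁻¹ 3 j)
    (lam₁ lam₂ lam₃ lam₄ : ℝ)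
    (P : Polynomial ℝ)
    (hP : P = (X - C lam₁) * (X - C lam₂) * (X - C lam₃) * (X - C lam₄))
    (k : Fin 4 → ℝ)
    (hk : k = Matrix.vecMul e (Polynomial.aeval A P)) :
    (A - Matrix.vecMulVec B k).charpoly = P := by
  set c0 : ℝ := lam₁*lam₂*lam₃*lam₄ with hc0
  set c1 : ℝ := -(lam₁*lam₂*lam₃ + lam₁*lam₂*lam₄ + lam₁*lam₃*lam₄ + lam₂*lam₃*lam₄) with hc1
  set c2 : ℝ := lam₁*lam₂ + lam₁*lam₃ + lam₁*lam₄ + lam₂*lam₃ + lam₂*lam₄ + lam₃*lam₄ with hc2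
  set c3 : ℝ := -(lam₁+lam₂+lam₃+lam₄) with hc3
  have hPexp : P = X^4 + C c3 * X^3 + C c2 * X^2 + C c1 * X + C c0 := by
    rw [hP, hc0, hc1, hc2, hc3]
    simp only [map_neg, map_add, _root_.map_mul]
    ring
  have hEB : ∀ n : Fin 4, e ⬝ᵥ ((A ^ (n:ℕ)) *ᵥ B) = if (3 : Fin 4) = n then 1 else 0 := by
    intro n
    have h1 : e ⬝ᵥ ((A ^ (n:ℕ)) *ᵥ B) = (Ctrb⁻¹ * Ctrb) 3 n := by
      simp [Matrix.mul_apply, dotProduct, hCtrb, he]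
    rw [h1, Matrix.nonsing_inv_mul Ctrb hinv, Matrix.one_apply]
  have h0 : e ⬝ᵥ ((A ^ (0:ℕ)) *ᵥ B) = 0 := by simpa using hEB 0
  have h1 : e ⬝ᵥ ((A ^ (1:ℕ)) *ᵥ B) = 0 := by simpa using hEB 1
  have h2 : e ⬝ᵥ ((A ^ (2:ℕ)) *ᵥ B) = 0 := by simpa using hEB 2
  have h3 : e ⬝ᵥ ((A ^ (3:ℕ)) *ᵥ B) = 1 := by simpa using hEB 3
  have h0' : e ⬝ᵥ B = 0 := by simpa using h0
  have h1' : e ⬝ᵥ (A *ᵥ B) = 0 := by simpa using h1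
  set T : Matrix (Fin 4) (Fin 4) ℝ :=
    Matrix.of (fun i j => Matrix.vecMul e (A ^ (i : ℕ)) j) with hT
  have hTC : ∀ i j : Fin 4, (T * Ctrb) i j = e ⬝ᵥ ((A ^ ((i:ℕ)+(j:ℕ))) *ᵥ B) := by
    intro i j
    have : (T * Ctrb) i j = Matrix.vecMul e (A ^ (i:ℕ)) ⬝ᵥ ((A ^ (j:ℕ)) *ᵥ B) := by
      simp [Matrix.mul_apply, dotProduct, hCtrb, hT]
    rw [this, ← Matrix.dotProduct_mulVec, Matrix.mulVec_mulVec, ← pow_add]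
  have hdTC : (T * Ctrb).det = 1 := by
    rw [ack_det_fin_four]
    rw [hTC 0 0, hTC 0 1, hTC 0 2, hTC 0 3, hTC 1 0, hTC 1 1, hTC 1 2, hTC 1 3,
      hTC 2 0, hTC 2 1, hTC 2 2, hTC 2 3, hTC 3 0, hTC 3 1, hTC 3 2, hTC 3 3]
    simp only [show ((0:Fin 4):ℕ) = 0 from rfl, show ((1:Fin 4):ℕ) = 1 from rfl,
      show ((2:Fin 4):ℕ) = 2 from rfl, show ((3:Fin 4):ℕ) = 3 from rfl]
    norm_num [h0', h1', h2, h3]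
  have hdT : IsUnit T.det :=
    IsUnit.of_mul_eq_one Ctrb.det (by rw [← Matrix.det_mul]; exact hdTC)
  have hPA : Polynomial.aeval A P = A^4 + c3 • A^3 + c2 • A^2 + c1 • A + c0 • 1 := by
    rw [hPexp]
    simp [map_add, _root_.map_mul, map_pow, aeval_X, aeval_C, Algebra.algebraMap_eq_smul_one,
      smul_mul_assoc]
  have hsm : ∀ (c : ℝ) (M : Matrix (Fin 4) (Fin 4) ℝ) (v : Fin 4 → ℝ),
      Matrix.vecMul v (c • M) = c • Matrix.vecMul v M := by
    intro c M v
    funext j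
    simp [Matrix.vecMul, dotProduct, Finset.mul_sum, mul_left_comm]
  have hk' : k = Matrix.vecMul e (A^4) + c3 • Matrix.vecMul e (A^3)
      + c2 • Matrix.vecMul e (A^2) + c1 • Matrix.vecMul e A + c0 • e := by
    rw [hk, hPA, Matrix.vecMul_add, Matrix.vecMul_add, Matrix.vecMul_add, Matrix.vecMul_add,
      hsm, hsm, hsm, hsm, Matrix.vecMul_one]
  have hrow : ∀ m : ℕ, Matrix.vecMul (Matrix.vecMul e (A ^ m)) (A - Matrix.vecMulVec B k)
      = Matrix.vecMul e (A ^ (m+1)) - (e ⬝ᵥ ((A ^ m) *ᵥ B)) • k := by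
    intro m
    rw [Matrix.vecMul_sub, Matrix.vecMul_vecMul, ← pow_succ, ack_vecMul_vecMulVec,
      Matrix.dotProduct_mulVec]
  have hR0 : Matrix.vecMul (Matrix.vecMul e (A ^ (0:ℕ))) (A - Matrix.vecMulVec B k)
      = Matrix.vecMul e (A ^ (1:ℕ)) := by
    rw [hrow 0, h0, zero_smul, sub_zero]
  have hR1 : Matrix.vecMul (Matrix.vecMul e (A ^ (1:ℕ))) (A - Matrix.vecMulVec B k)
      = Matrix.vecMul e (A ^ (2:ℕ)) := by
    rw [hrow 1, h1, zero_smul, sub_zero]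
  have hR2 : Matrix.vecMul (Matrix.vecMul e (A ^ (2:ℕ))) (A - Matrix.vecMulVec B k)
      = Matrix.vecMul e (A ^ (3:ℕ)) := by
    rw [hrow 2, h2, zero_smul, sub_zero]
  have hR3 : Matrix.vecMul (Matrix.vecMul e (A ^ (3:ℕ))) (A - Matrix.vecMulVec B k)
      = -(c0 • e) - c1 • Matrix.vecMul e (A ^ (1:ℕ))
        - c2 • Matrix.vecMul e (A ^ (2:ℕ)) - c3 • Matrix.vecMul e (A ^ (3:ℕ)) := by
    rw [hrow 3, h3, one_smul, hk']
    funext j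
    simp [Pi.add_apply, Pi.sub_apply, Pi.neg_apply, Pi.smul_apply, smul_eq_mul]
    ring
  set F : Matrix (Fin 4) (Fin 4) ℝ :=
    !![0,1,0,0; 0,0,1,0; 0,0,0,1; -c0,-c1,-c2,-c3] with hF
  have hmul : ∀ (M N : Matrix (Fin 4) (Fin 4) ℝ) (i : Fin 4),
      (M * N) i = Matrix.vecMul (M i) N := by
    intro M N i; funext j; simp [Matrix.mul_apply, Matrix.vecMul, dotProduct]
  have key : T * (A - Matrix.vecMulVec B k) = F * T := by
    funext i j
    fin_cases i
    · show (Matrix.vecMul (T 0) (A - Matrix.vecMulVec B k)) j = (Matrix.vecMul (F 0) T) j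
      rw [show T 0 = Matrix.vecMul e (A ^ (0:ℕ)) from rfl, hR0]
      simp [hF, Matrix.vecMul, dotProduct, Fin.sum_univ_four, hT,
        show ((1:Fin 4):ℕ) = 1 from rfl]
    · show (Matrix.vecMul (T 1) (A - Matrix.vecMulVec B k)) j = (Matrix.vecMul (F 1) T) j
      rw [show T 1 = Matrix.vecMul e (A ^ (1:ℕ)) from rfl, hR1]
      simp [hF, Matrix.vecMul, dotProduct, Fin.sum_univ_four, hT,
        show ((2:Fin 4):ℕ) = 2 from rfl]
    · show (Matrix.vecMul (T 2) (A - Matrix.vecMulVec B k)) j = (Matrix.vecMul (F 2) T) j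
      rw [show T 2 = Matrix.vecMul e (A ^ (2:ℕ)) from rfl, hR2]
      simp [hF, Matrix.vecMul, dotProduct, Fin.sum_univ_four, hT,
        show ((3:Fin 4):ℕ) = 3 from rfl]
    · show (Matrix.vecMul (T 3) (A - Matrix.vecMulVec B k)) j = (Matrix.vecMul (F 3) T) j
      rw [show T 3 = Matrix.vecMul e (A ^ (3:ℕ)) from rfl, hR3]
      simp [hF, hT, Matrix.vecMul, dotProduct, Fin.sum_univ_four,
        pow_zero, Matrix.vecMul_one,
        show ((0:Fin 4):ℕ) = 0 from rfl, show ((1:Fin 4):ℕ) = 1 from rfl,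
        show ((2:Fin 4):ℕ) = 2 from rfl, show ((3:Fin 4):ℕ) = 3 from rfl]
      fin_cases j <;> simp [Matrix.one_apply] <;> ring
  have hM : A - Matrix.vecMulVec B k = T⁻¹ * F * T := by
    rw [Matrix.mul_assoc, ← key, Matrix.nonsing_inv_mul_cancel_left _ _ hdT]
  rw [hM, ack_charpoly_conj4 _ _ hdT, hPexp]
  rw [Matrix.charpoly, ack_det_fin_four]
  simp [hF, charmatrix_apply, Matrix.diagonal, Matrix.of_apply]
  ring
end
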